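/- arXiv:1309.2082 — 5 statements merged into one kernel-verified Lean document; each statement's English description precedes it below -/
import Mathlib

section
/- Nielsen's identity: H_{n+m}(x,s) = Σ_k binomial(n,k) binomial(m,k) k! (−s)^k H_{n-k}(x,s) H_{m-k}(x,s). -/
/-- Bivariate Hermite polynomial `H n x s = ∑ (-1)^k C(n,2k)(2k-1)!! s^k x^(n-2k)`. -/
noncomputable def hermiteH (n : ℕ) (x s : ℝ) : ℝ :=
  ∑ k ∈ Finset.range (n / 2 + 1),
    (-1 : ℝ) ^ k * (n.choose (2 * k) : ℝ) * (∏ i ∈ Finset.range k, (2 * i + 1 : ℝ))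
      * s ^ k * x ^ (n - 2 * k)

lemma hermiteH_zero (x s : ℝ) : hermiteH 0 x s = 1 := by simp [hermiteH]
lemma hermiteH_one (x s : ℝ) : hermiteH 1 x s = x := by simp [hermiteH]

lemma hermiteH_rec (x s : ℝ) (a : ℕ) :
    hermiteH (a+2) x s = x * hermiteH (a+1) x s - (a+1) * s * hermiteH a x s := by
  have stepA : hermiteH (a+2) x s = x^(a+2) + ∑ k ∈ Finset.range (a/2+1),
      ((-1:ℝ)^(k+1) * ((a+1).choose (2*k+2) : ℝ) * (∏ i ∈ Finset.range (k+1), (2 * i + 1 : ℝ))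
        * s^(k+1) * x^(a - 2*k)
      + (-1:ℝ)^(k+1) * ((a+1).choose (2*k+1) : ℝ) * (∏ i ∈ Finset.range (k+1), (2 * i + 1 : ℝ))
        * s^(k+1) * x^(a - 2*k)) := by
    rw [hermiteH, show (a+2)/2 + 1 = (a/2 + 1) + 1 by omega, Finset.sum_range_succ']
    rw [add_comm]
    congr 1
    · simp
    · apply Finset.sum_congr rfl
      intro k _
      have h1 : 2 * (k+1) = 2*k + 2 := by ring
      have h2 : a + 2 - (2*k+2) = a - 2*k := by omega
      rw [h1, h2, Nat.choose_succ_succ (a+1) (2*k+1)]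
      push_cast
      ring
  have stepB : x * hermiteH (a+1) x s = x^(a+2) + ∑ k ∈ Finset.range (a/2+1),
      (-1:ℝ)^(k+1) * ((a+1).choose (2*k+2) : ℝ) * (∏ i ∈ Finset.range (k+1), (2 * i + 1 : ℝ))
        * s^(k+1) * x^(a - 2*k) := by
    rw [hermiteH, Finset.mul_sum, Finset.sum_range_succ']
    rw [add_comm]
    congr 1
    · simp [pow_succ]; ring
    · rw [show (∑ k ∈ Finset.range (a/2+1),
          (-1:ℝ)^(k+1) * ((a+1).choose (2*k+2) : ℝ) * (∏ i ∈ Finset.range (k+1), (2 * i + 1 : ℝ))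
            * s^(k+1) * x^(a - 2*k))
          = ∑ k ∈ Finset.range ((a+1)/2),
          (-1:ℝ)^(k+1) * ((a+1).choose (2*k+2) : ℝ) * (∏ i ∈ Finset.range (k+1), (2 * i + 1 : ℝ))
            * s^(k+1) * x^(a - 2*k) from ?_]
      · apply Finset.sum_congr rfl
        intro k hk
        simp only [Finset.mem_range] at hk
        have h3 : a - 2*k = (a - 2*k - 1) + 1 := by omega
        conv_rhs => rw [h3]
        rw [show 2*(k+1) = 2*k+2 by ring, show a + 1 - (2*k+2) = a - 2*k - 1 by omega, pow_succ]
        ring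
      · symm
        apply Finset.sum_subset
        · apply Finset.range_subset_range.2; omega
        · intro k _ hk
          simp only [Finset.mem_range, not_lt] at hk
          rw [Nat.choose_eq_zero_of_lt (show a + 1 < 2*k + 2 by omega)]
          simp
  have stepC : (a+1) * s * hermiteH a x s = -∑ k ∈ Finset.range (a/2+1),
      ((-1:ℝ)^(k+1) * ((a+1).choose (2*k+1) : ℝ) * (∏ i ∈ Finset.range (k+1), (2 * i + 1 : ℝ))
        * s^(k+1) * x^(a - 2*k)) := by
    rw [hermiteH, Finset.mul_sum, ← Finset.sum_neg_distrib]
    apply Finset.sum_congr rfl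
    intro k _
    have h1' : ((a:ℝ)+1) * (a.choose (2*k) : ℝ) = ((a+1).choose (2*k+1) : ℝ) * (2*(k:ℝ)+1) := by
      exact_mod_cast congrArg (Nat.cast : ℕ → ℝ) (Nat.add_one_mul_choose_eq a (2*k))
    rw [Finset.prod_range_succ]
    push_cast
    linear_combination ((-1:ℝ)^k * (∏ i ∈ Finset.range k, (2 * (i:ℝ) + 1)) * s^(k+1) * x^(a-2*k)) * h1'
  rw [stepA, stepB, stepC, Finset.sum_add_distrib]
  ring

lemma hermiteH_rec' (x s : ℝ) (a : ℕ) :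
    hermiteH (a+1) x s = x * hermiteH a x s - a * s * hermiteH (a-1) x s := by
  cases a with
  | zero => simp [hermiteH_zero, hermiteH_one]
  | succ b => simpa using hermiteH_rec x s b

noncomputable def nterm (n m : ℕ) (x s : ℝ) (k : ℕ) : ℝ :=
  (n.choose k : ℝ) * (m.choose k : ℝ) * (k.factorial : ℝ) * (-s) ^ k *
    hermiteH (n - k) x s * hermiteH (m - k) x s

lemma key (x s : ℝ) (n m k : ℕ) :
    (n.choose k : ℝ) * (m.choose k : ℝ) * (k.factorial : ℝ) * (-s)^k
        * hermiteH (n+1-k) x s * hermiteH (m-k) x s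
      + (n.choose k : ℝ) * (m.choose (k+1) : ℝ) * ((k+1).factorial : ℝ) * (-s)^(k+1)
        * hermiteH (n-k) x s * hermiteH (m-(k+1)) x s
    = (n.choose k : ℝ) * (m.choose k : ℝ) * (k.factorial : ℝ) * (-s)^k
        * hermiteH (n-k) x s * hermiteH (m+1-k) x s
      + (n.choose (k+1) : ℝ) * (m.choose k : ℝ) * ((k+1).factorial : ℝ) * (-s)^(k+1)
        * hermiteH (n-(k+1)) x s * hermiteH (m-k) x s := by
  rcases le_or_gt k n with hn | hn
  · rcases le_or_gt k m with hm | hm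
    · have e1 : n + 1 - k = (n - k) + 1 := by omega
      have e2 : m + 1 - k = (m - k) + 1 := by omega
      have e3 : n - (k+1) = (n - k) - 1 := by omega
      have e4 : m - (k+1) = (m - k) - 1 := by omega
      rw [e1, e2, e3, e4, hermiteH_rec' x s (n-k), hermiteH_rec' x s (m-k)]
      have hc1 : ((n.choose (k+1) : ℝ)) * (k+1) = (n.choose k : ℝ) * ((n:ℝ) - k) := by
        have := Nat.choose_succ_right_eq n k
        have h := congrArg (Nat.cast : ℕ → ℝ) this
        push_cast [Nat.cast_sub hn] at h
        linarith [h]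
      have hc2 : ((m.choose (k+1) : ℝ)) * (k+1) = (m.choose k : ℝ) * ((m:ℝ) - k) := by
        have := Nat.choose_succ_right_eq m k
        have h := congrArg (Nat.cast : ℕ → ℝ) this
        push_cast [Nat.cast_sub hm] at h
        linarith [h]
      have hnk : ((n - k : ℕ) : ℝ) = (n:ℝ) - k := by push_cast [Nat.cast_sub hn]; ring
      have hmk : ((m - k : ℕ) : ℝ) = (m:ℝ) - k := by push_cast [Nat.cast_sub hm]; ring
      rw [hnk, hmk, Nat.factorial_succ]
      push_cast
      linear_combination
        -((m.choose k : ℝ) * (k.factorial : ℝ) * (-s)^(k+1) * hermiteH (n-k-1) x s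
          * hermiteH (m-k) x s) * hc1
        + ((n.choose k : ℝ) * (k.factorial : ℝ) * (-s)^(k+1) * hermiteH (n-k) x s
          * hermiteH (m-k-1) x s) * hc2
    · rw [Nat.choose_eq_zero_of_lt hm, Nat.choose_eq_zero_of_lt (by omega : m < k+1)]
      push_cast; ring
  · rw [Nat.choose_eq_zero_of_lt hn, Nat.choose_eq_zero_of_lt (by omega : n < k+1)]
    push_cast; ring

lemma step (x s : ℝ) (n m : ℕ) :
    ∑ k ∈ Finset.range (n+m+2), nterm (n+1) m x s k
      = ∑ k ∈ Finset.range (n+m+2), nterm n (m+1) x s k := by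
  -- A k and B k
  set A : ℕ → ℝ := fun k => (n.choose k : ℝ) * (m.choose k : ℝ) * (k.factorial : ℝ) * (-s)^k
      * hermiteH (n+1-k) x s * hermiteH (m-k) x s with hA
  set B : ℕ → ℝ := fun k => (n.choose k : ℝ) * (m.choose k : ℝ) * (k.factorial : ℝ) * (-s)^k
      * hermiteH (n-k) x s * hermiteH (m+1-k) x s with hB
  set As : ℕ → ℝ := fun k => (n.choose k : ℝ) * (m.choose (k+1) : ℝ) * ((k+1).factorial : ℝ)
      * (-s)^(k+1) * hermiteH (n-k) x s * hermiteH (m-(k+1)) x s with hAs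
  set Bs : ℕ → ℝ := fun k => (n.choose (k+1) : ℝ) * (m.choose k : ℝ) * ((k+1).factorial : ℝ)
      * (-s)^(k+1) * hermiteH (n-(k+1)) x s * hermiteH (m-k) x s with hBs
  have e1 : ∀ k, nterm (n+1) m x s (k+1) = A (k+1) + As k := by
    intro k
    rw [nterm, hA, hAs]
    simp only
    rw [Nat.choose_succ_succ n k]
    have : n + 1 - (k+1) = n - k := by omega
    rw [this]
    push_cast
    ring
  have e2 : ∀ k, nterm n (m+1) x s (k+1) = B (k+1) + Bs k := by
    intro k
    rw [nterm, hB, hBs]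
    simp only
    rw [Nat.choose_succ_succ m k]
    have : m + 1 - (k+1) = m - k := by omega
    rw [this]
    push_cast
    ring
  have hA0 : nterm (n+1) m x s 0 = A 0 := by rw [nterm, hA]; norm_num
  have hB0 : nterm n (m+1) x s 0 = B 0 := by rw [nterm, hB]; norm_num
  rw [Finset.sum_range_succ' (fun k => nterm (n+1) m x s k) (n+m+1),
      Finset.sum_range_succ' (fun k => nterm n (m+1) x s k) (n+m+1)]
  simp only [e1, e2, hA0, hB0, Finset.sum_add_distrib]
  have hAtop : Finset.sum (Finset.range (n+m+1)) (fun k => A (k+1)) + A 0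
      = ∑ k ∈ Finset.range (n+m+1), A k := by
    rw [← Finset.sum_range_succ' A (n+m+1), Finset.sum_range_succ]
    have : A (n+m+1) = 0 := by
      rw [hA]; simp only
      rw [Nat.choose_eq_zero_of_lt (show n < n+m+1 by omega)]
      push_cast; ring
    rw [this, add_zero]
  have hBtop : Finset.sum (Finset.range (n+m+1)) (fun k => B (k+1)) + B 0
      = ∑ k ∈ Finset.range (n+m+1), B k := by
    rw [← Finset.sum_range_succ' B (n+m+1), Finset.sum_range_succ]
    have : B (n+m+1) = 0 := by
      rw [hB]; simp only
      rw [Nat.choose_eq_zero_of_lt (show n < n+m+1 by omega)]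
      push_cast; ring
    rw [this, add_zero]
  have main : ∑ k ∈ Finset.range (n+m+1), (A k + As k)
      = ∑ k ∈ Finset.range (n+m+1), (B k + Bs k) :=
    Finset.sum_congr rfl (fun k _ => key x s n m k)
  rw [Finset.sum_add_distrib, Finset.sum_add_distrib] at main
  linarith [main, hAtop, hBtop]

lemma main_lemma (x s : ℝ) (m : ℕ) : ∀ n, hermiteH (n+m) x s
    = ∑ k ∈ Finset.range (n+m+1), nterm n m x s k := by
  induction m with
  | zero =>
    intro n
    rw [Finset.sum_eq_single 0]
    · rw [nterm]
      simp [hermiteH_zero]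
    · intro b _ hb
      rw [nterm, Nat.choose_eq_zero_of_lt (show 0 < b from Nat.pos_of_ne_zero hb)]
      push_cast; ring
    · intro h
      exact absurd (Finset.mem_range.2 (by omega)) h
  | succ m ih =>
    intro n
    have h1 : n + (m+1) = (n+1) + m := by omega
    rw [h1, ih (n+1), show (n+1)+m+1 = n+m+2 by omega, step x s n m,
      show n+m+2 = n+(m+1)+1 by omega]

theorem hermite_nielsen (n m : ℕ) (x s : ℝ) :
    hermiteH (n + m) x s =
      ∑ k ∈ Finset.range (min n m + 1),
        (n.choose k : ℝ) * (m.choose k : ℝ) * (k.factorial : ℝ) * (-s) ^ k *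
          hermiteH (n - k) x s * hermiteH (m - k) x s := by
  rw [main_lemma x s m n]
  rw [show (∑ k ∈ Finset.range (min n m + 1),
        (n.choose k : ℝ) * (m.choose k : ℝ) * (k.factorial : ℝ) * (-s) ^ k *
          hermiteH (n - k) x s * hermiteH (m - k) x s)
      = ∑ k ∈ Finset.range (min n m + 1), nterm n m x s k from rfl]
  symm
  apply Finset.sum_subset
  · apply Finset.range_subset_range.2; omega
  · intro k _ hk
    simp only [Finset.mem_range, not_lt] at hk
    have : n < k ∨ m < k := by omega
    rcases this with h | h
    · rw [nterm, Nat.choose_eq_zero_of_lt h]; push_cast; ring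
    · rw [nterm, Nat.choose_eq_zero_of_lt h]; push_cast; ring
end

section
/- The q-derivative of the q-Hermite polynomial satisfies D_q H_n(x,s,q) = [n]_q H_{n−1}(x,s,q), where D_q f(x) = (f(x) − f(qx))/((1−q)x). -/
noncomputable section

/-- The q-integer `[n]_q = (1 - q^n)/(1 - q)`. -/
def qnat (q : ℝ) (n : ℕ) : ℝ := (1 - q ^ n) / (1 - q)

/-- The q-factorial `[n]_q!`. -/
def qfac (q : ℝ) (n : ℕ) : ℝ := ∏ j ∈ Finset.range n, qnat q (j + 1)

/-- The Gaussian binomial coefficient. -/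
def qbinom (q : ℝ) (n k : ℕ) : ℝ := qfac q n / (qfac q k * qfac q (n - k))

/-- The odd q-double factorial `[2k-1]_q!! = [1]_q [3]_q ⋯ [2k-1]_q`. -/
def qdf (q : ℝ) (k : ℕ) : ℝ := ∏ i ∈ Finset.range k, qnat q (2 * i + 1)

/-- The bivariate q-Hermite polynomial
`H n (x,s,q) = ∑_{2k ≤ n} (-s)^k q^(k²) qbinom(n,2k) [2k-1]_q!! x^(n-2k)`. -/
def qHermite (q s : ℝ) (n : ℕ) (x : ℝ) : ℝ :=
  ∑ k ∈ Finset.range (n / 2 + 1),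
    (-s) ^ k * q ^ (k ^ 2) * qbinom q n (2 * k) * qdf q k * x ^ (n - 2 * k)

end

lemma qnat_ne_zero {q : ℝ} (hq : 0 < q) (hq1 : q < 1) {m : ℕ} (hm : 0 < m) :
    qnat q m ≠ 0 := by
  have h1 : q ^ m < 1 := pow_lt_one₀ hq.le hq1 hm.ne'
  have : 0 < qnat q m := div_pos (by linarith) (by linarith)
  exact this.ne'

lemma qfac_ne_zero {q : ℝ} (hq : 0 < q) (hq1 : q < 1) (m : ℕ) :
    qfac q m ≠ 0 := by
  unfold qfac
  exact Finset.prod_ne_zero_iff.mpr fun j _ => qnat_ne_zero hq hq1 (Nat.succ_pos j)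

lemma qfac_succ (q : ℝ) (m : ℕ) : qfac q (m + 1) = qfac q m * qnat q (m + 1) :=
  Finset.prod_range_succ _ _

lemma qbinom_key {q : ℝ} (hq : 0 < q) (hq1 : q < 1) {n k : ℕ} (h : 2 * k < n) :
    qbinom q n (2 * k) * qnat q (n - 2 * k)
      = qnat q n * qbinom q (n - 1) (2 * k) := by
  obtain ⟨m, hm⟩ : ∃ m, n - 2 * k = m + 1 := ⟨n - 2 * k - 1, by omega⟩
  obtain ⟨p, hp⟩ : ∃ p, n = p + 1 := ⟨n - 1, by omega⟩
  have h1 : n - 1 - 2 * k = m := by omega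
  have hfacn : qfac q n = qfac q (n - 1) * qnat q n := by
    conv_lhs => rw [hp, qfac_succ]
    rw [hp, Nat.add_sub_cancel]
  unfold qbinom
  rw [hm, h1, qfac_succ, hfacn]
  have h2 := qfac_ne_zero hq hq1 (2 * k)
  have h3 := qfac_ne_zero hq hq1 m
  have h4 : qnat q (m + 1) ≠ 0 := qnat_ne_zero hq hq1 (Nat.succ_pos m)
  field_simp

theorem qHermite_qDeriv (q : ℝ) (hq : 0 < q) (hq1 : q < 1) (s : ℝ) (n : ℕ)
    (x : ℝ) (hx : x ≠ 0) :
    (qHermite q s n x - qHermite q s n (q * x)) / ((1 - q) * x)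
      = qnat q n * qHermite q s (n - 1) x := by
  have hq' : (1 : ℝ) - q ≠ 0 := by linarith
  have hqx : (1 - q) * x ≠ 0 := mul_ne_zero hq' hx
  rw [div_eq_iff hqx]
  rcases Nat.eq_zero_or_pos n with hn | hn
  · subst hn
    simp [qHermite, qnat]
  unfold qHermite
  rw [Finset.mul_sum, Finset.sum_mul, ← Finset.sum_sub_distrib]
  have hsub : Finset.range ((n - 1) / 2 + 1) ⊆ Finset.range (n / 2 + 1) := by
    apply Finset.range_subset_range.mpr; omega
  rw [← Finset.sum_subset hsub ?h0]
  case h0 =>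
    intro k hk hk'
    simp only [Finset.mem_range] at hk hk'
    have : n - 2 * k = 0 := by omega
    rw [this]
    simp
  apply Finset.sum_congr rfl
  intro k hk
  simp only [Finset.mem_range] at hk
  have h2 : 2 * k < n := by omega
  have e1 : n - 2 * k = (n - 1 - 2 * k) + 1 := by omega
  set m := n - 1 - 2 * k with hm
  rw [e1, mul_pow]
  have e2 : qnat q (m + 1) * (1 - q) = 1 - q ^ (m + 1) := by
    unfold qnat; field_simp
  have hkey := qbinom_key hq hq1 h2
  rw [e1] at hkey
  linear_combination
    ((-s) ^ k * q ^ (k ^ 2) * qdf q k * (1 - q) * x ^ (m + 1)) * hkey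
      - ((-s) ^ k * q ^ (k ^ 2) * qbinom q n (2 * k) * qdf q k * x ^ (m + 1)) * e2
end

section
/- The discrete q-Hermite I polynomials satisfy h_n(x;q) = Σ_{j=0}^n q^{binom(n−j,2)} qbinomial(n,j) (x−1)(x−q)···(x−q^{j−1}). -/
/-- The q-Pochhammer symbol `(q; q²)_k = ∏_{i<k} (1 - q^(2i+1))`. -/
noncomputable def qPochOdd (q : ℝ) (k : ℕ) : ℝ := ∏ i ∈ Finset.range k, (1 - q ^ (2 * i + 1))

/-- The discrete q-Hermite I polynomial
`h n (x;q) = ∑_{2k ≤ n} (-1)^k q^(k²-k) qbinom(n,2k) (q;q²)_k x^(n-2k)`. -/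
noncomputable def discqHermiteI (q : ℝ) (n : ℕ) (x : ℝ) : ℝ :=
  ∑ k ∈ Finset.range (n / 2 + 1),
    (-1 : ℝ) ^ k * q ^ (k ^ 2 - k) * qbinom q n (2 * k) * qPochOdd q k * x ^ (n - 2 * k)

noncomputable def Pq (q : ℝ) (m : ℕ) : ℝ := ∏ i ∈ Finset.range m, (1 - q ^ (i+1))

noncomputable def Bq (q : ℝ) (n k : ℕ) : ℝ :=
  if k ≤ n then Pq q n / (Pq q k * Pq q (n - k)) else 0

lemma Pq_pos {q : ℝ} (hq : 0 < q) (hq1 : q < 1) (m : ℕ) : 0 < Pq q m := by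
  apply Finset.prod_pos
  intro i _
  have : q ^ (i+1) < 1 := pow_lt_one₀ hq.le hq1 (Nat.succ_ne_zero i)
  linarith

lemma Pq_ne {q : ℝ} (hq : 0 < q) (hq1 : q < 1) (m : ℕ) : Pq q m ≠ 0 := (Pq_pos hq hq1 m).ne'

lemma Pq_succ (q : ℝ) (m : ℕ) : Pq q (m+1) = Pq q m * (1 - q ^ (m+1)) :=
  Finset.prod_range_succ _ _

lemma Pq_zero (q : ℝ) : Pq q 0 = 1 := rfl

lemma Bq_of_le {q : ℝ} {n k : ℕ} (h : k ≤ n) :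
    Bq q n k = Pq q n / (Pq q k * Pq q (n - k)) := if_pos h

lemma Bq_of_gt {q : ℝ} {n k : ℕ} (h : n < k) : Bq q n k = 0 := if_neg (by omega)

lemma Bq_zero {q : ℝ} (hq : 0 < q) (hq1 : q < 1) (n : ℕ) : Bq q n 0 = 1 := by
  rw [Bq_of_le (Nat.zero_le n)]
  simp [Pq_zero, div_self (Pq_ne hq hq1 n)]

lemma Bq_self {q : ℝ} (hq : 0 < q) (hq1 : q < 1) (n : ℕ) : Bq q n n = 1 := by
  rw [Bq_of_le le_rfl]
  simp [Pq_zero, div_self (Pq_ne hq hq1 n)]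

lemma qbinom_eq {q : ℝ} (hq : 0 < q) (hq1 : q < 1) {n k : ℕ} (h : k ≤ n) :
    qbinom q n k = Bq q n k := by
  have h1q : (1 : ℝ) - q ≠ 0 := by linarith
  have hfac : ∀ m, qfac q m = Pq q m / (1-q)^m := by
    intro m
    simp only [qfac, Pq, qnat]
    rw [Finset.prod_div_distrib, Finset.prod_const, Finset.card_range]
  rw [qbinom, Bq_of_le h, hfac, hfac, hfac]
  rw [div_mul_div_comm, ← pow_add]
  have hkn : k + (n - k) = n := by omega
  rw [hkn]
  rw [div_div_div_cancel_right₀]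
  exact pow_ne_zero _ h1q

lemma fac_ne {q : ℝ} (hq : 0 < q) (hq1 : q < 1) (m : ℕ) : (1:ℝ) - q^(m+1) ≠ 0 := by
  have : q ^ (m+1) < 1 := pow_lt_one₀ hq.le hq1 (Nat.succ_ne_zero m)
  linarith

lemma pascal1 {q : ℝ} (hq : 0 < q) (hq1 : q < 1) (n j : ℕ) (hj : 1 ≤ j) :
    Bq q (n+1) j = Bq q n j + q^(n+1-j) * Bq q n (j-1) := by
  obtain ⟨i, rfl⟩ : ∃ i, j = i + 1 := ⟨j - 1, by omega⟩
  simp only [Nat.add_sub_cancel]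
  rcases lt_or_ge n (i+1) with h | h
  · rcases (show i = n ∨ n + 1 < i + 1 by omega) with rfl | hbig
    · rw [Bq_self hq hq1, Bq_of_gt (by omega), Bq_self hq hq1]
      simp
    · rw [Bq_of_gt (by omega), Bq_of_gt (by omega), Bq_of_gt (by omega)]
      ring
  · set a := n - (i+1) with ha
    have e1 : n - i = a + 1 := by omega
    have e2 : n + 1 - (i+1) = a + 1 := by omega
    rw [Bq_of_le (by omega), Bq_of_le (by omega), Bq_of_le (by omega), e1, e2,
      show n - (i+1) = a from rfl]
    have hpow : q^(n+1) = q^(a+1) * q^(i+1) := by rw [← pow_add]; congr 1; omega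
    have hPn : Pq q (n+1) = Pq q n * (1 - q^(a+1) * q^(i+1)) := by rw [Pq_succ, hpow]
    rw [hPn, Pq_succ q a, Pq_succ q i]
    have h1 := Pq_ne hq hq1 n
    have h2 := Pq_ne hq hq1 a
    have h3 := Pq_ne hq hq1 i
    have h4 := fac_ne hq hq1 a
    have h5 := fac_ne hq hq1 i
    field_simp
    ring

lemma pascal2 {q : ℝ} (hq : 0 < q) (hq1 : q < 1) (n j : ℕ) (hj : 1 ≤ j) :
    Bq q (n+1) j = q^j * Bq q n j + Bq q n (j-1) := by
  obtain ⟨i, rfl⟩ : ∃ i, j = i + 1 := ⟨j - 1, by omega⟩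
  simp only [Nat.add_sub_cancel]
  rcases lt_or_ge n (i+1) with h | h
  · rcases (show i = n ∨ n + 1 < i + 1 by omega) with rfl | hbig
    · rw [Bq_self hq hq1, Bq_of_gt (by omega), Bq_self hq hq1]
      simp
    · rw [Bq_of_gt (by omega), Bq_of_gt (by omega), Bq_of_gt (by omega)]
      ring
  · set a := n - (i+1) with ha
    have e1 : n - i = a + 1 := by omega
    have e2 : n + 1 - (i+1) = a + 1 := by omega
    rw [Bq_of_le (by omega), Bq_of_le (by omega), Bq_of_le (by omega), e1, e2,
      show n - (i+1) = a from rfl]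
    have hpow : q^(n+1) = q^(i+1) * q^(a+1) := by rw [← pow_add]; congr 1; omega
    have hPn : Pq q (n+1) = Pq q n * (1 - q^(i+1) * q^(a+1)) := by rw [Pq_succ, hpow]
    rw [hPn, Pq_succ q a, Pq_succ q i]
    have h1 := Pq_ne hq hq1 n
    have h2 := Pq_ne hq hq1 a
    have h3 := Pq_ne hq hq1 i
    have h4 := fac_ne hq hq1 a
    have h5 := fac_ne hq hq1 i
    field_simp
    ring

lemma absorb1 {q : ℝ} (hq : 0 < q) (hq1 : q < 1) (m j : ℕ) :
    (1 - q^(j+1)) * Bq q (m+1) (j+1) = (1 - q^(m+1)) * Bq q m j := by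
  rcases le_or_gt j m with h | h
  · rw [Bq_of_le (by omega), Bq_of_le (by omega), Nat.succ_sub_succ]
    rw [Pq_succ q m, Pq_succ q j]
    have h1 := Pq_ne hq hq1 m
    have h2 := Pq_ne hq hq1 j
    have h3 := Pq_ne hq hq1 (m - j)
    have h4 := fac_ne hq hq1 j
    field_simp
  · rw [Bq_of_gt (by omega), Bq_of_gt (by omega)]
    ring

lemma absorb2 {q : ℝ} (hq : 0 < q) (hq1 : q < 1) (m k : ℕ) :
    (1 - q^(m+1-k)) * Bq q (m+1) k = (1 - q^(m+1)) * Bq q m k := by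
  rcases le_or_gt k m with h | h
  · set b := m - k with hb
    have e1 : m + 1 - k = b + 1 := by omega
    rw [e1, Bq_of_le (by omega : k ≤ m + 1), Bq_of_le h, e1, ← hb]
    rw [Pq_succ q m, Pq_succ q b]
    have h1 := Pq_ne hq hq1 m
    have h2 := Pq_ne hq hq1 b
    have h3 := Pq_ne hq hq1 k
    have h4 := fac_ne hq hq1 b
    field_simp
  · rcases (show k = m + 1 ∨ m + 1 < k by omega) with rfl | hbig
    · simp [Bq_of_gt (by omega : m < m+1)]
    · rw [Bq_of_gt (by omega), Bq_of_gt (by omega)]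
      ring

noncomputable def Rq (q : ℝ) (n : ℕ) (x : ℝ) : ℝ :=
  ∑ j ∈ Finset.range (n+1), q^((n-j).choose 2) * Bq q n j * ∏ i ∈ Finset.range j, (x - q^i)

lemma hch (m : ℕ) : (m+1).choose 2 = m.choose 2 + m := by
  rw [Nat.choose_succ_succ, Nat.choose_one_right, Nat.add_comm]

lemma hch2 (m : ℕ) : (m+2).choose 2 = m.choose 2 + m + (m+1) := by
  rw [show m + 2 = (m+1) + 1 by omega, hch (m+1), hch m]

lemma R_rec {q : ℝ} (hq : 0 < q) (hq1 : q < 1) (n : ℕ) (x : ℝ) :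
    Rq q (n+2) x = x * Rq q (n+1) x - q^n * (1-q^(n+1)) * Rq q n x := by
  have key : ∀ j ∈ Finset.range (n+3),
      q^((n+2-j).choose 2) * Bq q (n+2) j * ∏ i ∈ Finset.range j, (x - q^i)
      = (if j = 0 then 0 else
          q^((n+2-j).choose 2) * Bq q (n+1) (j-1) * ∏ i ∈ Finset.range j, (x - q^i))
        + q^((n+1-j).choose 2) * q^j * Bq q (n+1) j * ∏ i ∈ Finset.range j, (x - q^i)
        - q^n * (1-q^(n+1)) *
            (q^((n-j).choose 2) * Bq q n j * ∏ i ∈ Finset.range j, (x - q^i)) := by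
    intro j hj
    rcases Nat.eq_zero_or_pos j with rfl | hj1
    · rw [if_pos rfl]
      simp only [Finset.range_zero, Finset.prod_empty, Nat.sub_zero,
        Bq_zero hq hq1, pow_zero, hch2 n, hch n, pow_add]
      ring
    · rw [if_neg (by omega), pascal2 hq hq1 (n+1) j hj1]
      have E : q^((n+2-j).choose 2) * (q^j * Bq q (n+1) j)
          = q^((n+1-j).choose 2) * q^j * Bq q (n+1) j
            - q^n * (1-q^(n+1)) * (q^((n-j).choose 2) * Bq q n j) := by
        rcases (show j ≤ n ∨ j = n + 1 ∨ j = n + 2 ∨ n + 2 < j by omega) with h | h | h | h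
        · obtain ⟨b, rfl⟩ : ∃ b, n = j + b := ⟨n - j, by omega⟩
          have hab := absorb2 hq hq1 (j+b) j
          rw [show j + b + 1 - j = b + 1 by omega] at hab
          rw [show j + b + 2 - j = b + 2 by omega, show j + b + 1 - j = b + 1 by omega,
            show j + b - j = b by omega, hch2 b, hch b]
          simp only [pow_add]
          linear_combination (-(q^(b.choose 2) * q^(j+b))) * hab
        · subst h
          rw [Bq_of_gt (show n < n + 1 by omega)]
          simp only [show n + 2 - (n+1) = 1 by omega, show n + 1 - (n+1) = 0 by omega,
            show n - (n+1) = 0 by omega]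
          norm_num
        · subst h
          rw [Bq_of_gt (show n + 1 < n + 2 by omega), Bq_of_gt (show n < n + 2 by omega)]
          ring
        · rw [Bq_of_gt (by omega), Bq_of_gt (by omega)]
          ring
      linear_combination (∏ i ∈ Finset.range j, (x - q^i)) * E
  have h3 : n + 2 + 1 = n + 3 := by omega
  rw [Rq, h3, Finset.sum_congr rfl key]
  simp only [Finset.sum_sub_distrib, Finset.sum_add_distrib]
  rw [← Finset.mul_sum]
  -- first sum: shift
  rw [Finset.sum_range_succ' _ (n+2)]
  simp only [if_pos rfl, Nat.succ_sub_succ, Nat.add_sub_cancel, if_neg (Nat.succ_ne_zero _),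
    add_zero, Nat.sub_zero, eq_self_iff_true, if_true]
  -- second sum: last term vanishes
  rw [Finset.sum_range_succ
    (fun j => q^((n+1-j).choose 2) * q^j * Bq q (n+1) j * ∏ i ∈ Finset.range j, (x - q^i)) (n+2)]
  rw [Bq_of_gt (show n + 1 < n + 2 by omega)]
  -- third sum: last two terms vanish
  rw [Finset.sum_range_succ
    (fun j => q^((n-j).choose 2) * Bq q n j * ∏ i ∈ Finset.range j, (x - q^i)) (n+2),
    Finset.sum_range_succ
    (fun j => q^((n-j).choose 2) * Bq q n j * ∏ i ∈ Finset.range j, (x - q^i)) (n+1)]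
  rw [Bq_of_gt (show n < n + 2 by omega), Bq_of_gt (show n < n + 1 by omega)]
  have hx : x * Rq q (n+1) x
      = (∑ j ∈ Finset.range (n+2),
          q^((n+1-j).choose 2) * Bq q (n+1) j * ∏ i ∈ Finset.range (j+1), (x - q^i))
      + ∑ j ∈ Finset.range (n+2),
          q^((n+1-j).choose 2) * q^j * Bq q (n+1) j * ∏ i ∈ Finset.range j, (x - q^i) := by
    rw [Rq, Finset.mul_sum, ← Finset.sum_add_distrib]
    refine Finset.sum_congr rfl fun j _ => ?_
    rw [Finset.prod_range_succ]
    ring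
  rw [hx, Rq]
  ring

noncomputable def Hq (q : ℝ) (n : ℕ) (x : ℝ) : ℝ :=
  ∑ k ∈ Finset.range (n/2+1),
    (-1:ℝ)^k * q^(k^2 - k) * Bq q n (2*k) * qPochOdd q k * x^(n - 2*k)

lemma qPochOdd_succ (q : ℝ) (m : ℕ) :
    qPochOdd q (m+1) = qPochOdd q m * (1 - q^(2*m+1)) := Finset.prod_range_succ _ _

lemma qPochOdd_zero (q : ℝ) : qPochOdd q 0 = 1 := rfl

lemma H_rec {q : ℝ} (hq : 0 < q) (hq1 : q < 1) (n : ℕ) (x : ℝ) :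
    Hq q (n+2) x = x * Hq q (n+1) x - q^n * (1-q^(n+1)) * Hq q n x := by
  have key : ∀ k ∈ Finset.range (n/2+2),
      (-1:ℝ)^k * q^(k^2-k) * Bq q (n+2) (2*k) * qPochOdd q k * x^(n+2-2*k)
      = (-1:ℝ)^k * q^(k^2-k) * Bq q (n+1) (2*k) * qPochOdd q k * (x * x^(n+1-2*k))
        - q^n * (1-q^(n+1)) * (if k = 0 then 0 else
            (-1:ℝ)^(k-1) * q^((k-1)^2-(k-1)) * Bq q n (2*(k-1)) * qPochOdd q (k-1)
              * x^(n-2*(k-1))) := by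
    intro k hk
    rcases Nat.eq_zero_or_pos k with rfl | hk1
    · rw [if_pos rfl]
      simp only [Nat.mul_zero, Nat.sub_zero, pow_zero, one_mul, mul_one, mul_zero, sub_zero,
        Bq_zero hq hq1, qPochOdd_zero]
      ring
    · obtain ⟨m, rfl⟩ : ∃ m, k = m + 1 := ⟨k-1, by omega⟩
      rw [if_neg (Nat.succ_ne_zero m)]
      have hm : 2*m ≤ n := by
        have := Finset.mem_range.mp hk
        omega
      obtain ⟨e, rfl⟩ : ∃ e, n = 2*m + e := ⟨n - 2*m, by omega⟩
      rw [pascal1 hq hq1 (2*m+e+1) (2*(m+1)) (by omega)]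
      have hmm : m ≤ m^2 := Nat.le_self_pow two_ne_zero m
      have hsq : (m+1)^2 = m^2 + 2*m + 1 := by ring
      rw [show (m+1)^2 - (m+1) = (m^2 - m) + 2*m by omega,
        Nat.add_sub_cancel, qPochOdd_succ,
        show 2*m+e+2 - 2*(m+1) = e by omega,
        show 2*(m+1) - 1 = 2*m+1 by omega,
        show 2*m+e - 2*m = e by omega]
      have hab := absorb1 hq hq1 (2*m+e) (2*m)
      rcases Nat.eq_zero_or_pos e with rfl | he1
      · rw [Bq_of_gt (show 2*m+0+1 < 2*(m+1) by omega),
          show 2*m+0+1 - 2*(m+1) = 0 by omega]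
        simp only [Nat.add_zero] at hab ⊢
        rw [Bq_self hq hq1, Bq_self hq hq1] at hab
        rw [Bq_self hq hq1, Bq_self hq hq1]
        simp only [pow_add, pow_zero]
        ring
      · obtain ⟨f, rfl⟩ : ∃ f, e = f + 1 := ⟨e-1, by omega⟩
        rw [show 2*m+(f+1)+1 - 2*(m+1) = f by omega]
        rw [show 2*m+(f+1)+1 = 2*m+f+2 by omega] at *
        rw [show 2*m+(f+1) = 2*m+f+1 by omega] at *
        linear_combination ((-1:ℝ)^(m+1) * q^(m^2-m) * q^(2*m) * q^(f+1)
          * qPochOdd q m * x^(f+1)) * hab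
  have h2 : (n+2)/2 + 1 = n/2 + 2 := by omega
  rw [Hq, h2, Finset.sum_congr rfl key]
  simp only [Finset.sum_sub_distrib]
  rw [← Finset.mul_sum]
  have hA : ∑ k ∈ Finset.range (n/2+2),
      (-1:ℝ)^k * q^(k^2-k) * Bq q (n+1) (2*k) * qPochOdd q k * (x * x^(n+1-2*k))
      = x * Hq q (n+1) x := by
    rw [Hq, Finset.mul_sum]
    rw [Finset.sum_subset (Finset.range_subset_range.mpr (show (n+1)/2+1 ≤ n/2+2 by omega))]
    · exact Finset.sum_congr rfl fun k _ => by ring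
    · intro k hk hk2
      rw [Bq_of_gt (by simp only [Finset.mem_range] at hk hk2; omega)]
      ring
  have hB : ∑ k ∈ Finset.range (n/2+2),
      (if k = 0 then (0:ℝ) else
        (-1:ℝ)^(k-1) * q^((k-1)^2-(k-1)) * Bq q n (2*(k-1)) * qPochOdd q (k-1)
          * x^(n-2*(k-1)))
      = Hq q n x := by
    rw [Finset.sum_range_succ' _ (n/2+1)]
    simp only [if_neg (Nat.succ_ne_zero _), Nat.add_sub_cancel, eq_self_iff_true, if_true,
      add_zero]
    rfl
  rw [hA, hB]

lemma H_eq_R {q : ℝ} (hq : 0 < q) (hq1 : q < 1) : ∀ n : ℕ, ∀ x : ℝ, Hq q n x = Rq q n x := by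
  intro n
  induction n using Nat.strong_induction_on with
  | _ n ih =>
    match n with
    | 0 =>
      intro x
      rw [Hq, Rq]
      simp [Bq_self hq hq1, qPochOdd_zero]
    | 1 =>
      intro x
      rw [Hq, Rq]
      simp [Finset.sum_range_succ, Bq_zero hq hq1, Bq_self hq hq1, qPochOdd_zero]
    | (m+2) =>
      intro x
      rw [H_rec hq hq1, R_rec hq hq1, ih (m+1) (by omega), ih m (by omega)]



theorem discqHermiteI_expansion (q : ℝ) (hq : 0 < q) (hq1 : q < 1) (n : ℕ) (x : ℝ) :
    discqHermiteI q n x =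
      ∑ j ∈ Finset.range (n + 1),
        q ^ ((n - j).choose 2) * qbinom q n j * ∏ i ∈ Finset.range j, (x - q ^ i) := by
  have h1 : discqHermiteI q n x = Hq q n x := by
    rw [discqHermiteI, Hq]
    refine Finset.sum_congr rfl fun k hk => ?_
    rw [qbinom_eq hq hq1 (show 2*k ≤ n by have := Finset.mem_range.mp hk; omega)]
  have h2 : (∑ j ∈ Finset.range (n + 1),
      q ^ ((n - j).choose 2) * qbinom q n j * ∏ i ∈ Finset.range j, (x - q ^ i)) = Rq q n x := by
    rw [Rq]
    refine Finset.sum_congr rfl fun j hj => ?_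
    rw [qbinom_eq hq hq1 (show j ≤ n by have := Finset.mem_range.mp hj; omega)]
  rw [h1, h2, H_eq_R hq hq1]
end

section
/- Moment formula for discrete q-Hermite I: with Λ(f) = (∫_{−1}^1 f(x)(q²x²;q²)_∞ d_q x) / (∫_{−1}^1 (q²x²;q²)_∞ d_q x), one has Λ(x^{2m}) = (q;q²)_m = Π_{i=0}^{m−1}(1 − q^{2i+1}) and Λ(x^{2m+1}) = 0. -/
/-- The infinite q-Pochhammer symbol `(a; p)_∞ = ∏_{j≥0} (1 - a p^j)`. -/
noncomputable def qPochInf (a p : ℝ) : ℝ := ∏' j : ℕ, (1 - a * p ^ j)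

/-- The weight `(q²x²; q²)_∞`. -/
noncomputable def qWeight (q x : ℝ) : ℝ := qPochInf (q ^ 2 * x ^ 2) (q ^ 2)

/-- The normalized linear functional given by the Jackson q-integral
`Λ(f) = (∫_{-1}^1 f(x) (q²x²;q²)_∞ d_q x) / (∫_{-1}^1 (q²x²;q²)_∞ d_q x)`. -/
noncomputable def qHermiteIFunctional (q : ℝ) (f : ℝ → ℝ) : ℝ :=
  (∑' j : ℕ, (f (q ^ j) + f (-(q ^ j))) * qWeight q (q ^ j) * (q ^ j - q ^ (j + 1))) /
  (∑' j : ℕ, (qWeight q (q ^ j) + qWeight q (-(q ^ j))) * (q ^ j - q ^ (j + 1)))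

open Real

lemma summable_log_one_sub {c p : ℝ} (hc0 : 0 ≤ c) (hc1 : c < 1) (hp0 : 0 ≤ p) (hp1 : p < 1) :
    Summable fun j : ℕ => Real.log (1 - c * p ^ j) := by
  rw [← summable_neg_iff]
  have hterm : ∀ j : ℕ, 0 < 1 - c * p ^ j := by
    intro j
    have h1 : p ^ j ≤ 1 := pow_le_one₀ hp0 hp1.le
    nlinarith
  refine Summable.of_nonneg_of_le (fun j => ?_) (fun j => ?_)
    ((summable_geometric_of_lt_one hp0 hp1).mul_left ((1 - c)⁻¹ * c))
  · have h1 : p ^ j ≤ 1 := pow_le_one₀ hp0 hp1.le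
    have : 1 - c * p ^ j ≤ 1 := sub_le_self _ (mul_nonneg hc0 (pow_nonneg hp0 j))
    simpa using Real.log_nonpos (hterm j).le this
  · have hpj : 0 ≤ c * p ^ j := mul_nonneg hc0 (pow_nonneg hp0 _)
    have h1 : p ^ j ≤ 1 := pow_le_one₀ hp0 hp1.le
    have hcpj : c * p ^ j ≤ c := by nlinarith
    have hx : 0 < 1 - c * p ^ j := hterm j
    have hlog : -Real.log (1 - c * p ^ j) = Real.log (1 - c * p ^ j)⁻¹ := by
      rw [Real.log_inv]
    have h2 := Real.log_le_sub_one_of_pos (inv_pos.mpr hx)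
    have e : (1 - c * p ^ j)⁻¹ - 1 = (c * p ^ j) * (1 - c * p ^ j)⁻¹ := by
      field_simp
      ring
    have h4 : (c * p ^ j) * (1 - c * p ^ j)⁻¹ ≤ (c * p ^ j) * (1 - c)⁻¹ := by
      gcongr <;> linarith
    rw [hlog]
    calc Real.log (1 - c * p ^ j)⁻¹ ≤ (1 - c * p ^ j)⁻¹ - 1 := h2
      _ = (c * p ^ j) * (1 - c * p ^ j)⁻¹ := e
      _ ≤ (c * p ^ j) * (1 - c)⁻¹ := h4
      _ = (1 - c)⁻¹ * c * p ^ j := by ring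

lemma qPochInf_hasProd {c p : ℝ} (hc0 : 0 ≤ c) (hc1 : c < 1) (hp0 : 0 ≤ p) (hp1 : p < 1) :
    HasProd (fun j : ℕ => 1 - c * p ^ j)
      (Real.exp (∑' j : ℕ, Real.log (1 - c * p ^ j))) := by
  have hterm : ∀ j : ℕ, 0 < 1 - c * p ^ j := by
    intro j
    have h1 : p ^ j ≤ 1 := pow_le_one₀ hp0 hp1.le
    nlinarith
  have h := (summable_log_one_sub hc0 hc1 hp0 hp1).hasSum.rexp
  refine h.congr_fun fun j => ?_
  simp [Real.exp_log (hterm j)]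

lemma qPochInf_eq_exp {c p : ℝ} (hc0 : 0 ≤ c) (hc1 : c < 1) (hp0 : 0 ≤ p) (hp1 : p < 1) :
    qPochInf c p = Real.exp (∑' j : ℕ, Real.log (1 - c * p ^ j)) :=
  (qPochInf_hasProd hc0 hc1 hp0 hp1).tprod_eq

lemma qPochInf_pos {c p : ℝ} (hc0 : 0 ≤ c) (hc1 : c < 1) (hp0 : 0 ≤ p) (hp1 : p < 1) :
    0 < qPochInf c p := by
  rw [qPochInf_eq_exp hc0 hc1 hp0 hp1]; exact Real.exp_pos _

lemma qPochInf_le_one {c p : ℝ} (hc0 : 0 ≤ c) (hc1 : c < 1) (hp0 : 0 ≤ p) (hp1 : p < 1) :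
    qPochInf c p ≤ 1 := by
  rw [qPochInf_eq_exp hc0 hc1 hp0 hp1, Real.exp_le_one_iff]
  refine tsum_nonpos fun j => ?_
  have h1 : p ^ j ≤ 1 := pow_le_one₀ hp0 hp1.le
  have h0 : 0 ≤ c * p ^ j := mul_nonneg hc0 (pow_nonneg hp0 _)
  exact Real.log_nonpos (by nlinarith) (by nlinarith)

lemma qPochInf_succ {c p : ℝ} (hc0 : 0 ≤ c) (hc1 : c < 1) (hp0 : 0 ≤ p) (hp1 : p < 1) :
    qPochInf c p = (1 - c) * qPochInf (c * p) p := by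
  have hcp0 : 0 ≤ c * p := mul_nonneg hc0 hp0
  have hcp1 : c * p < 1 := by nlinarith
  have hshift : (fun j : ℕ => 1 - c * p ^ (j + 1)) = fun j : ℕ => 1 - (c * p) * p ^ j := by
    funext j; ring
  have hmul : Multipliable fun j : ℕ => 1 - c * p ^ (j + 1) := by
    rw [hshift]; exact ⟨_, qPochInf_hasProd hcp0 hcp1 hp0 hp1⟩
  have := tprod_eq_zero_mul' (f := fun j : ℕ => 1 - c * p ^ j) hmul
  simp only [pow_zero, mul_one] at this
  rw [qPochInf, this, qPochInf, ← hshift]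

section Weight

variable {q : ℝ} (hq : 0 < q) (hq1 : q < 1)
include hq hq1

lemma qWeight_c (j : ℕ) : qWeight q (q ^ j) = qPochInf (q ^ (2 * j + 2)) (q ^ 2) := by
  rw [qWeight]
  congr 1
  ring

lemma qW_c0 (j : ℕ) : (0:ℝ) ≤ q ^ (2 * j + 2) := pow_nonneg hq.le _

lemma qW_c1 (j : ℕ) : q ^ (2 * j + 2) < 1 := pow_lt_one₀ hq.le hq1 (by omega)

lemma qWeight_pos (j : ℕ) : 0 < qWeight q (q ^ j) := by
  rw [qWeight_c hq hq1]
  exact qPochInf_pos (qW_c0 hq hq1 j) (qW_c1 hq hq1 j) (pow_nonneg hq.le _)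
    (pow_lt_one₀ hq.le hq1 (by omega))

lemma qWeight_le_one (j : ℕ) : qWeight q (q ^ j) ≤ 1 := by
  rw [qWeight_c hq hq1]
  exact qPochInf_le_one (qW_c0 hq hq1 j) (qW_c1 hq hq1 j) (pow_nonneg hq.le _)
    (pow_lt_one₀ hq.le hq1 (by omega))

lemma qWeight_rec (j : ℕ) :
    qWeight q (q ^ j) = (1 - q ^ (2 * j + 2)) * qWeight q (q ^ (j + 1)) := by
  rw [qWeight_c hq hq1, qWeight_c hq hq1,
    qPochInf_succ (qW_c0 hq hq1 j) (qW_c1 hq hq1 j) (pow_nonneg hq.le _)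
      (pow_lt_one₀ hq.le hq1 (by omega))]
  have h : q ^ (2 * j + 2) * q ^ 2 = q ^ (2 * (j + 1) + 2) := by ring
  rw [h]

lemma summable_qh (m : ℕ) (g : ℕ → ℝ) (hg0 : ∀ j, 0 ≤ g j) (hg1 : ∀ j, g j ≤ 1) :
    Summable fun j : ℕ => q ^ ((2 * m + 1) * j) * g j := by
  refine Summable.of_nonneg_of_le (fun j => mul_nonneg (pow_nonneg hq.le _) (hg0 j))
    (fun j => ?_)
    (summable_geometric_of_lt_one (pow_nonneg hq.le (2 * m + 1))
      (pow_lt_one₀ hq.le hq1 (by omega)))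
  rw [← pow_mul]
  exact mul_le_of_le_one_right (pow_nonneg hq.le _) (hg1 j)

lemma qhS_succ (m : ℕ) :
    (∑' j : ℕ, q ^ ((2 * (m + 1) + 1) * j) * qWeight q (q ^ j))
      = (1 - q ^ (2 * m + 1)) * ∑' j : ℕ, q ^ ((2 * m + 1) * j) * qWeight q (q ^ j) := by
  set w : ℕ → ℝ := fun j => qWeight q (q ^ j) with hw
  have hw0 : ∀ j, 0 ≤ w j := fun j => (qWeight_pos hq hq1 j).le
  have hw1 : ∀ j, w j ≤ 1 := fun j => qWeight_le_one hq hq1 j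
  have hS : ∀ k, Summable fun j : ℕ => q ^ ((2 * k + 1) * j) * w j :=
    fun k => summable_qh hq hq1 k w hw0 hw1
  have hU : ∀ k, Summable fun j : ℕ => q ^ ((2 * k + 1) * j) * w (j + 1) :=
    fun k => summable_qh hq hq1 k (fun j => w (j + 1)) (fun j => hw0 _) (fun j => hw1 _)
  have key1 : ∀ k, (∑' j : ℕ, q ^ ((2 * k + 1) * j) * w j)
      = w 0 + q ^ (2 * k + 1) * ∑' j : ℕ, q ^ ((2 * k + 1) * j) * w (j + 1) := by
    intro k
    rw [Summable.tsum_eq_zero_add (hS k), ← tsum_mul_left]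
    congr 1
    · simp
    · exact tsum_congr fun j => by ring
  have key2 : (∑' j : ℕ, q ^ ((2 * m + 1) * j) * w j)
      = (∑' j : ℕ, q ^ ((2 * m + 1) * j) * w (j + 1))
        - q ^ 2 * ∑' j : ℕ, q ^ ((2 * (m + 1) + 1) * j) * w (j + 1) := by
    rw [← tsum_mul_left, ← Summable.tsum_sub (hU m) ((hU (m + 1)).mul_left _)]
    refine tsum_congr fun j => ?_
    have hrec : w j = (1 - q ^ (2 * j + 2)) * w (j + 1) := qWeight_rec hq hq1 j
    rw [hrec]
    ring
  have h1 := key1 m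
  have h2 := key1 (m + 1)
  have hqpow : (0:ℝ) < q ^ (2 * m + 1) := pow_pos hq _
  have hgoal : q ^ (2 * m + 1) * (∑' j : ℕ, q ^ ((2 * m + 1) * j) * w j)
      = (∑' j : ℕ, q ^ ((2 * m + 1) * j) * w j)
        - ∑' j : ℕ, q ^ ((2 * (m + 1) + 1) * j) * w j := by
    linear_combination (q ^ (2 * m + 1)) * key2 - h1 + h2
  linarith [hgoal]

end Weight

theorem discqHermiteI_moments (q : ℝ) (hq : 0 < q) (hq1 : q < 1) (m : ℕ) :
    qHermiteIFunctional q (fun x => x ^ (2 * m))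
        = ∏ i ∈ Finset.range m, (1 - q ^ (2 * i + 1)) ∧
    qHermiteIFunctional q (fun x => x ^ (2 * m + 1)) = 0 := by
  have hS : ∀ k : ℕ, Summable fun j : ℕ => q ^ ((2 * k + 1) * j) * qWeight q (q ^ j) :=
    fun k => summable_qh hq hq1 k _ (fun j => (qWeight_pos hq hq1 j).le)
      (fun j => qWeight_le_one hq hq1 j)
  have hSprod : ∀ k : ℕ, (∑' j : ℕ, q ^ ((2 * k + 1) * j) * qWeight q (q ^ j))
      = (∑' j : ℕ, q ^ ((2 * 0 + 1) * j) * qWeight q (q ^ j))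
        * ∏ i ∈ Finset.range k, (1 - q ^ (2 * i + 1)) := by
    intro k
    induction k with
    | zero => simp
    | succ n ih => rw [qhS_succ hq hq1 n, ih, Finset.prod_range_succ]; ring
  have hS0pos : 0 < ∑' j : ℕ, q ^ ((2 * 0 + 1) * j) * qWeight q (q ^ j) := by
    refine Summable.tsum_pos (hS 0) (fun j => mul_nonneg (pow_nonneg hq.le _)
      (qWeight_pos hq hq1 j).le) 0 ?_
    simpa using qWeight_pos hq hq1 0
  have h2q : (2 * (1 - q) : ℝ) ≠ 0 := by nlinarith
  have hden : (∑' j : ℕ, (qWeight q (q ^ j) + qWeight q (-(q ^ j))) * (q ^ j - q ^ (j + 1)))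
      = (2 * (1 - q)) * ∑' j : ℕ, q ^ ((2 * 0 + 1) * j) * qWeight q (q ^ j) := by
    rw [← tsum_mul_left]
    refine tsum_congr fun j => ?_
    have hW : qWeight q (-(q ^ j)) = qWeight q (q ^ j) := by
      rw [qWeight, qWeight, neg_sq]
    rw [hW]; ring
  constructor
  · have heq : qHermiteIFunctional q (fun x => x ^ (2 * m)) =
        (∑' j : ℕ, ((q ^ j) ^ (2 * m) + (-(q ^ j)) ^ (2 * m)) * qWeight q (q ^ j)
            * (q ^ j - q ^ (j + 1))) /
        (∑' j : ℕ, (qWeight q (q ^ j) + qWeight q (-(q ^ j))) * (q ^ j - q ^ (j + 1))) := rfl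
    have hnum : (∑' j : ℕ, ((q ^ j) ^ (2 * m) + (-(q ^ j)) ^ (2 * m)) * qWeight q (q ^ j)
            * (q ^ j - q ^ (j + 1)))
        = (2 * (1 - q)) * ∑' j : ℕ, q ^ ((2 * m + 1) * j) * qWeight q (q ^ j) := by
      rw [← tsum_mul_left]
      refine tsum_congr fun j => ?_
      rw [Even.neg_pow (even_two_mul m) (q ^ j)]
      ring
    rw [heq, hnum, hden, mul_div_mul_left _ _ h2q, hSprod m]
    exact mul_div_cancel_left₀ _ hS0pos.ne'
  · have heq : qHermiteIFunctional q (fun x => x ^ (2 * m + 1)) =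
        (∑' j : ℕ, ((q ^ j) ^ (2 * m + 1) + (-(q ^ j)) ^ (2 * m + 1)) * qWeight q (q ^ j)
            * (q ^ j - q ^ (j + 1))) /
        (∑' j : ℕ, (qWeight q (q ^ j) + qWeight q (-(q ^ j))) * (q ^ j - q ^ (j + 1))) := rfl
    have hzero : ∀ j : ℕ, ((q ^ j) ^ (2 * m + 1) + (-(q ^ j)) ^ (2 * m + 1)) * qWeight q (q ^ j)
            * (q ^ j - q ^ (j + 1)) = (fun _ : ℕ => (0:ℝ)) j := by
      intro j
      rw [Odd.neg_pow ⟨m, by ring⟩ (q ^ j)]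
      ring
    rw [heq, tsum_congr hzero, tsum_zero, zero_div]
end

section
/- Define q-Euler-type moments by the functional Φ on polynomials in s with Φ(H_{2n}(1,s,q)) = δ_{n,0}. Then Φ(H_{2n+1}(1,s,q)) = (−1)^n T_{2n+1}(q), where the q-tangent numbers are defined by (e_q(z) − e_q(−z))/(e_q(z) + e_q(−z)) = Σ_{n≥0} (−1)^n T_{2n+1}(q) z^{2n+1}/[2n+1]_q!. -/
open Polynomial PowerSeries

/-- `H n (1, s, q)` as a polynomial in the variable `s`. -/
noncomputable def qHermiteAtOne (q : ℝ) (n : ℕ) : Polynomial ℝ :=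
  ∑ k ∈ Finset.range (n / 2 + 1),
    Polynomial.C ((-1 : ℝ) ^ k * q ^ (k ^ 2) * qbinom q n (2 * k) * qdf q k) *
      Polynomial.X ^ k

/-- The formal q-exponential `e_q(z) = ∑ z^n/[n]_q!`. -/
noncomputable def qExp (q : ℝ) : PowerSeries ℝ := PowerSeries.mk fun n => (qfac q n)⁻¹

/-- `e_q(-z)`. -/
noncomputable def qExpNeg (q : ℝ) : PowerSeries ℝ :=
  PowerSeries.mk fun n => (-1 : ℝ) ^ n * (qfac q n)⁻¹

/-- The formal q-tangent series `∑ (-1)^n T_{2n+1}(q) z^(2n+1)/[2n+1]_q!`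
built from a sequence `T` with `T n = T_{2n+1}(q)`. -/
noncomputable def qTanSeries (q : ℝ) (T : ℕ → ℝ) : PowerSeries ℝ :=
  PowerSeries.mk fun m =>
    if m % 2 = 1 then (-1 : ℝ) ^ (m / 2) * T (m / 2) * (qfac q m)⁻¹ else 0


-- Auxiliary lemmas ---------------------------------------------------------

lemma qfac_pos {q : ℝ} (hq : 0 < q) (hq1 : q < 1) (n : ℕ) : 0 < qfac q n := by
  apply Finset.prod_pos
  intro j _
  have h1 : q ^ (j + 1) < 1 := pow_lt_one₀ hq.le hq1 (Nat.succ_ne_zero j)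
  have : 0 < 1 - q := by linarith
  exact div_pos (by linarith) this

lemma sum_range_double (F : ℕ → ℝ) (N : ℕ) :
    ∑ i ∈ Finset.range (2 * N), F i = ∑ l ∈ Finset.range N, (F (2 * l) + F (2 * l + 1)) := by
  induction N with
  | zero => simp
  | succ N ih =>
    have h : 2 * (N + 1) = (2 * N) + 1 + 1 := by ring
    rw [h, Finset.sum_range_succ, Finset.sum_range_succ, ih, Finset.sum_range_succ]
    ring

lemma key_rec (q : ℝ) (T : ℕ → ℝ)
    (hT : qExp q - qExpNeg q = (qExp q + qExpNeg q) * qTanSeries q T) (N : ℕ) :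
    (qfac q (2 * N + 1))⁻¹ =
      ∑ j ∈ Finset.range (N + 1),
        (qfac q (2 * (N - j)))⁻¹ * ((-1 : ℝ) ^ j * T j * (qfac q (2 * j + 1))⁻¹) := by
  have h := congrArg (PowerSeries.coeff (2 * N + 1)) hT
  rw [map_sub, PowerSeries.coeff_mul, Finset.Nat.sum_antidiagonal_eq_sum_range_succ_mk] at h
  simp only [qExp, qExpNeg, qTanSeries, coeff_mk, map_add, Nat.succ_eq_add_one] at h
  have hodd : (-1 : ℝ) ^ (2 * N + 1) = -1 := by
    simp [pow_succ, pow_mul]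
  rw [hodd] at h
  have h2 : 2 * N + 1 + 1 = 2 * (N + 1) := by ring
  rw [h2, sum_range_double] at h
  have heval : ∀ l ∈ Finset.range (N + 1),
      ((((qfac q (2*l))⁻¹ + (-1:ℝ)^(2*l) * (qfac q (2*l))⁻¹) *
        (if (2*N+1 - 2*l) % 2 = 1 then
          (-1:ℝ)^((2*N+1-2*l)/2) * T ((2*N+1-2*l)/2) * (qfac q (2*N+1-2*l))⁻¹ else 0)) +
       (((qfac q (2*l+1))⁻¹ + (-1:ℝ)^(2*l+1) * (qfac q (2*l+1))⁻¹) *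
        (if (2*N+1 - (2*l+1)) % 2 = 1 then
          (-1:ℝ)^((2*N+1-(2*l+1))/2) * T ((2*N+1-(2*l+1))/2) *
            (qfac q (2*N+1-(2*l+1)))⁻¹ else 0)))
      = 2 * ((qfac q (2*l))⁻¹ * ((-1:ℝ)^(N-l) * T (N-l) * (qfac q (2*(N-l)+1))⁻¹)) := by
    intro l hl
    rw [Finset.mem_range] at hl
    have e1 : 2*N+1 - 2*l = 2*(N-l)+1 := by omega
    have e2 : 2*N+1 - (2*l+1) = 2*(N-l) := by omega
    rw [e1, e2]
    have d1 : (2*(N-l)+1) / 2 = N - l := by omega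
    rw [if_pos (by omega : (2*(N-l)+1) % 2 = 1), if_neg (by omega : ¬ (2*(N-l)) % 2 = 1), d1]
    have q1 : (-1:ℝ)^(2*l) = 1 := by simp [pow_mul]
    have q2 : (-1:ℝ)^(2*l+1) = -1 := by simp [pow_succ, pow_mul]
    rw [q1, q2]
    ring
  rw [Finset.sum_congr rfl heval, ← Finset.mul_sum] at h
  have h3 : ∑ l ∈ Finset.range (N+1),
      (qfac q (2*l))⁻¹ * ((-1:ℝ)^(N-l) * T (N-l) * (qfac q (2*(N-l)+1))⁻¹)
    = ∑ j ∈ Finset.range (N+1),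
      (qfac q (2*(N-j)))⁻¹ * ((-1:ℝ)^j * T j * (qfac q (2*j+1))⁻¹) := by
    rw [← Finset.sum_range_reflect]
    apply Finset.sum_congr rfl
    intro j hj
    rw [Finset.mem_range] at hj
    have e1 : N + 1 - 1 - j = N - j := by omega
    have e2 : N - (N - j) = j := by omega
    rw [e1, e2]
  rw [h3] at h
  linarith

lemma coeff_qHermiteAtOne (q : ℝ) (m k : ℕ) :
    (qHermiteAtOne q m).coeff k =
      if k ≤ m / 2 then (-1 : ℝ) ^ k * q ^ (k ^ 2) * qbinom q m (2 * k) * qdf q k else 0 := by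
  rw [qHermiteAtOne, Polynomial.finset_sum_coeff]
  simp only [Polynomial.coeff_C_mul, Polynomial.coeff_X_pow, mul_ite, mul_one, mul_zero]
  rw [Finset.sum_ite_eq (Finset.range (m/2+1)) k]
  simp [Nat.lt_succ_iff]

lemma H_odd_eq (q : ℝ) (hq : 0 < q) (hq1 : q < 1) (T : ℕ → ℝ)
    (key : ∀ N : ℕ, (qfac q (2 * N + 1))⁻¹ =
      ∑ j ∈ Finset.range (N + 1),
        (qfac q (2 * (N - j)))⁻¹ * ((-1 : ℝ) ^ j * T j * (qfac q (2 * j + 1))⁻¹))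
    (n : ℕ) :
    qHermiteAtOne q (2 * n + 1) =
      ∑ j ∈ Finset.range (n + 1),
        (qfac q (2 * n + 1) * (qfac q (2 * (n - j)))⁻¹ *
            ((-1 : ℝ) ^ j * T j * (qfac q (2 * j + 1))⁻¹)) •
          qHermiteAtOne q (2 * (n - j)) := by
  have hne : ∀ m : ℕ, qfac q m ≠ 0 := fun m => (qfac_pos hq hq1 m).ne'
  ext k
  rw [Polynomial.finset_sum_coeff]
  simp only [Polynomial.coeff_smul, smul_eq_mul, coeff_qHermiteAtOne]
  have d1 : (2 * n + 1) / 2 = n := by omega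
  rw [d1]
  by_cases hk : k ≤ n
  · rw [if_pos hk]
    rw [← Finset.sum_subset (Finset.range_subset_range.2 (by omega : n - k + 1 ≤ n + 1))
      (by
        intro j hj hj2
        rw [Finset.mem_range] at hj hj2
        have : ¬ k ≤ 2 * (n - j) / 2 := by omega
        rw [if_neg this, mul_zero])]
    have hterm : ∀ j ∈ Finset.range (n - k + 1),
        (qfac q (2 * n + 1) * (qfac q (2 * (n - j)))⁻¹ *
            ((-1 : ℝ) ^ j * T j * (qfac q (2 * j + 1))⁻¹)) *
          (if k ≤ 2 * (n - j) / 2 then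
            (-1 : ℝ) ^ k * q ^ (k ^ 2) * qbinom q (2 * (n - j)) (2 * k) * qdf q k else 0)
        = (qfac q (2 * n + 1) * ((-1 : ℝ) ^ k * q ^ (k ^ 2) * qdf q k) * (qfac q (2 * k))⁻¹) *
          ((qfac q (2 * ((n - k) - j)))⁻¹ * ((-1 : ℝ) ^ j * T j * (qfac q (2 * j + 1))⁻¹)) := by
      intro j hj
      rw [Finset.mem_range] at hj
      have hjk : j ≤ n - k := by omega
      have : k ≤ 2 * (n - j) / 2 := by omega
      rw [if_pos this, qbinom]
      have e1 : 2 * (n - j) - 2 * k = 2 * ((n - k) - j) := by omega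
      rw [e1]
      have hcan : qfac q (2 * (n - j)) * (qfac q (2 * (n - j)))⁻¹ = 1 :=
        mul_inv_cancel₀ (hne _)
      linear_combination (qfac q (2 * n + 1) * ((-1 : ℝ) ^ k * q ^ (k ^ 2) * qdf q k) *
        (qfac q (2 * k))⁻¹ * ((qfac q (2 * ((n - k) - j)))⁻¹ *
          ((-1 : ℝ) ^ j * T j * (qfac q (2 * j + 1))⁻¹))) * hcan
    rw [Finset.sum_congr rfl hterm, ← Finset.mul_sum]
    rw [← key (n - k)]
    rw [qbinom]
    have e2 : 2 * n + 1 - 2 * k = 2 * (n - k) + 1 := by omega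
    rw [e2]
    field_simp
  · rw [if_neg hk]
    rw [Finset.sum_eq_zero]
    intro j hj
    rw [Finset.mem_range] at hj
    have : ¬ k ≤ 2 * (n - j) / 2 := by omega
    rw [if_neg this, mul_zero]

theorem qTangent_from_functional (q : ℝ) (hq : 0 < q) (hq1 : q < 1)
    (Φ : Polynomial ℝ →ₗ[ℝ] ℝ)
    (hΦ : ∀ n : ℕ, Φ (qHermiteAtOne q (2 * n)) = if n = 0 then 1 else 0)
    (T : ℕ → ℝ)
    (hT : qExp q - qExpNeg q = (qExp q + qExpNeg q) * qTanSeries q T)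
    (n : ℕ) :
    Φ (qHermiteAtOne q (2 * n + 1)) = (-1 : ℝ) ^ n * T n := by
  have hne : ∀ m : ℕ, qfac q m ≠ 0 := fun m => (qfac_pos hq hq1 m).ne'
  have key := key_rec q T hT
  rw [H_odd_eq q hq hq1 T key n, map_sum]
  simp only [map_smul, smul_eq_mul, hΦ]
  have hsum : ∀ j ∈ Finset.range (n + 1),
      (qfac q (2 * n + 1) * (qfac q (2 * (n - j)))⁻¹ *
          ((-1 : ℝ) ^ j * T j * (qfac q (2 * j + 1))⁻¹)) *
        (if n - j = 0 then (1 : ℝ) else 0)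
      = if j = n then (qfac q (2 * n + 1) * (qfac q (2 * (n - j)))⁻¹ *
          ((-1 : ℝ) ^ j * T j * (qfac q (2 * j + 1))⁻¹)) else 0 := by
    intro j hj
    rw [Finset.mem_range] at hj
    by_cases hjn : j = n
    · subst hjn
      simp
    · rw [if_neg (by omega : ¬ n - j = 0), if_neg hjn, mul_zero]
  rw [Finset.sum_congr rfl hsum, Finset.sum_ite_eq' (Finset.range (n + 1)) n]
  rw [if_pos (Finset.self_mem_range_succ n)]
  have h0 : n - n = 0 := by omega
  rw [h0]
  have hq0 : qfac q (2 * 0) = 1 := by simp [qfac]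
  rw [hq0]
  have hne1 : qfac q (2 * n + 1) ≠ 0 := (qfac_pos hq hq1 _).ne'
  field_simp
end
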